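/- arXiv:2506.03414 — 2 statements merged into one kernel-verified Lean document; each statement's English description precedes it below -/
import Mathlib

section
/- Neyman–Pearson dominance of the model ROC: for a point process with integrable intensity λ : W → [0,∞) with ∫_W λ > 0, and any measurable covariate Z : W → ℝ, for every p ∈ [0,1], if A = {u : λ(u) > t} and B = {u : Z(u) > s} are level sets with |A| = |B| = p|W|, then ∫_A λ ≥ ∫_B λ; consequently the theoretical model-ROC R_{λ,λ}(p) = ∫_A λ / ∫_W λ dominates the theoretical covariate-ROC R_{Z,λ}(p) = ∫_B λ / ∫_W λ, and hence the model AUC is at least the covariate AUC. -/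
open MeasureTheory Set intervalIntegral
open scoped ENNReal

/-- Neyman–Pearson core: the strict upper level set of `lam` maximises the
mass of `lam` among measurable sets of the same measure. -/
lemma np_core_aux {W : Type*} [MeasurableSpace W] (μ : Measure W) [IsFiniteMeasure μ]
    (lam : W → ℝ) (hlam_meas : Measurable lam) (hlam_int : Integrable lam μ)
    (t : ℝ) {B : Set W} (hBm : MeasurableSet B)
    (hAB : μ {u | t < lam u} = μ B) :
    ∫ u in B, lam u ∂μ ≤ ∫ u in {u | t < lam u}, lam u ∂μ := by
  set A : Set W := {u | t < lam u} with hA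
  have hAm : MeasurableSet A := measurableSet_lt measurable_const hlam_meas
  have hfin : μ (A ∩ B) ≠ ⊤ := (measure_lt_top μ _).ne
  have hdiff : μ (B \ A) = μ (A \ B) := by
    have h1 : μ (A \ B) + μ (A ∩ B) = μ A := measure_diff_add_inter A hBm
    have h2 : μ (B \ A) + μ (B ∩ A) = μ B := measure_diff_add_inter B hAm
    rw [inter_comm] at h2
    have := h1.trans hAB
    rw [← h2] at this
    exact (WithTop.add_right_cancel hfin this).symm
  have hintA : ∫ u in A ∩ B, lam u ∂μ + ∫ u in A \ B, lam u ∂μ = ∫ u in A, lam u ∂μ :=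
    integral_inter_add_diff hBm hlam_int.integrableOn
  have hintB : ∫ u in B ∩ A, lam u ∂μ + ∫ u in B \ A, lam u ∂μ = ∫ u in B, lam u ∂μ :=
    integral_inter_add_diff hAm hlam_int.integrableOn
  have key : ∫ u in B \ A, lam u ∂μ ≤ ∫ u in A \ B, lam u ∂μ := by
    have h1 : ∫ u in B \ A, lam u ∂μ ≤ ∫ _ in B \ A, t ∂μ := by
      apply setIntegral_mono_on hlam_int.integrableOn
        (integrableOn_const (measure_lt_top μ _).ne) (hBm.diff hAm)
      intro x hx
      exact le_of_not_gt hx.2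
    have h2 : ∫ _ in A \ B, t ∂μ ≤ ∫ u in A \ B, lam u ∂μ := by
      apply setIntegral_mono_on (integrableOn_const (measure_lt_top μ _).ne)
        hlam_int.integrableOn (hAm.diff hBm)
      intro x hx
      exact le_of_lt hx.1
    calc ∫ u in B \ A, lam u ∂μ ≤ ∫ _ in B \ A, t ∂μ := h1
      _ = t * (μ (B \ A)).toReal := by rw [setIntegral_const, smul_eq_mul]; exact mul_comm _ _
      _ = t * (μ (A \ B)).toReal := by rw [hdiff]
      _ = ∫ _ in A \ B, t ∂μ := by rw [setIntegral_const, smul_eq_mul]; exact mul_comm _ _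
      _ ≤ _ := h2
  rw [← hintA, ← hintB, inter_comm]
  linarith

/-- The mass of a nonnegative integrable `lam` on strict upper level sets whose
measure is prescribed to be `p · μ(univ)` is monotone in `p` on `[0,1]`. -/
lemma mono_aux {W : Type*} [MeasurableSpace W] (μ : Measure W) [IsFiniteMeasure μ]
    (lam : W → ℝ) (hlam_nonneg : ∀ u, 0 ≤ lam u) (hlam_int : Integrable lam μ)
    (f : W → ℝ) (hf : Measurable f) (thr : ℝ → ℝ)
    (hl : ∀ p ∈ Set.Icc (0:ℝ) 1, μ {u | thr p < f u} = ENNReal.ofReal p * μ Set.univ) :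
    MonotoneOn (fun p => ∫ u in {u | thr p < f u}, lam u ∂μ) (Set.Icc (0:ℝ) 1) := by
  intro p hp q hq hpq
  set A : Set W := {u | thr p < f u} with hAdef
  set B : Set W := {u | thr q < f u} with hBdef
  have hAm : MeasurableSet A := measurableSet_lt measurable_const hf
  have hBm : MeasurableSet B := measurableSet_lt measurable_const hf
  have hμle : μ A ≤ μ B := by
    rw [hl p hp, hl q hq]
    exact mul_le_mul_left (ENNReal.ofReal_le_ofReal hpq) _
  rcases le_total (thr q) (thr p) with h | h
  · have hsub : A ⊆ B := fun u hu => lt_of_le_of_lt h hu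
    exact setIntegral_mono_set hlam_int.integrableOn
      (Filter.Eventually.of_forall fun u => hlam_nonneg u) (HasSubset.Subset.eventuallyLE hsub)
  · have hsub : B ⊆ A := fun u hu => lt_of_le_of_lt h hu
    have hae : B =ᵐ[μ] A :=
      ae_eq_of_subset_of_measure_ge hsub hμle hBm.nullMeasurableSet (measure_lt_top μ A).ne
    exact le_of_eq (setIntegral_congr_set hae.symm)

/-- Neyman–Pearson dominance of the model ROC.  For an intensity
`λ ≥ 0` and any covariate `Z`, given thresholds `tfun p`, `sfun p` whose strict
upper level sets both occupy a fraction `p` of the domain, the mass of `λ` on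
the level set of `λ` dominates that on the level set of `Z`; consequently the
theoretical model-ROC dominates the theoretical covariate-ROC pointwise, and
the model AUC is at least the covariate AUC. -/
theorem model_roc_dominates_covariate_roc
    {W : Type*} [MeasurableSpace W] (μ : Measure W) [IsFiniteMeasure μ]
    (hμ0 : 0 < μ Set.univ)
    (lam Z : W → ℝ) (hlam_meas : Measurable lam) (hZ_meas : Measurable Z)
    (hlam_nonneg : ∀ u, 0 ≤ lam u) (hlam_int : Integrable lam μ)
    (hlam_pos : 0 < ∫ u, lam u ∂μ)
    (tfun sfun : ℝ → ℝ)
    (hlevel : ∀ p ∈ Set.Icc (0 : ℝ) 1,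
      μ {u | tfun p < lam u} = ENNReal.ofReal p * μ Set.univ ∧
      μ {u | sfun p < Z u} = ENNReal.ofReal p * μ Set.univ) :
    (∀ p ∈ Set.Icc (0 : ℝ) 1,
      ∫ u in {u | sfun p < Z u}, lam u ∂μ ≤ ∫ u in {u | tfun p < lam u}, lam u ∂μ) ∧
    (∀ p ∈ Set.Icc (0 : ℝ) 1,
      (∫ u in {u | sfun p < Z u}, lam u ∂μ) / (∫ u, lam u ∂μ) ≤
        (∫ u in {u | tfun p < lam u}, lam u ∂μ) / (∫ u, lam u ∂μ)) ∧
    (∫ p in (0 : ℝ)..1, (∫ u in {u | sfun p < Z u}, lam u ∂μ) / (∫ u, lam u ∂μ)) ≤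
      ∫ p in (0 : ℝ)..1, (∫ u in {u | tfun p < lam u}, lam u ∂μ) / (∫ u, lam u ∂μ) := by
  have hNP : ∀ p ∈ Set.Icc (0 : ℝ) 1,
      ∫ u in {u | sfun p < Z u}, lam u ∂μ ≤ ∫ u in {u | tfun p < lam u}, lam u ∂μ := by
    intro p hp
    have hBm : MeasurableSet {u | sfun p < Z u} := measurableSet_lt measurable_const hZ_meas
    exact np_core_aux μ lam hlam_meas hlam_int (tfun p) hBm
      (((hlevel p hp).1).trans ((hlevel p hp).2).symm)
  have hdiv : ∀ p ∈ Set.Icc (0 : ℝ) 1,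
      (∫ u in {u | sfun p < Z u}, lam u ∂μ) / (∫ u, lam u ∂μ) ≤
        (∫ u in {u | tfun p < lam u}, lam u ∂μ) / (∫ u, lam u ∂μ) := fun p hp =>
    div_le_div_of_nonneg_right (hNP p hp) hlam_pos.le
  refine ⟨hNP, hdiv, ?_⟩
  have hmono1 : MonotoneOn
      (fun p => (∫ u in {u | tfun p < lam u}, lam u ∂μ) / (∫ u, lam u ∂μ)) (Set.Icc (0:ℝ) 1) := by
    intro p hp q hq hpq
    exact div_le_div_of_nonneg_right
      (mono_aux μ lam hlam_nonneg hlam_int lam hlam_meas tfun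
        (fun r hr => (hlevel r hr).1) hp hq hpq) hlam_pos.le
  have hmono2 : MonotoneOn
      (fun p => (∫ u in {u | sfun p < Z u}, lam u ∂μ) / (∫ u, lam u ∂μ)) (Set.Icc (0:ℝ) 1) := by
    intro p hp q hq hpq
    exact div_le_div_of_nonneg_right
      (mono_aux μ lam hlam_nonneg hlam_int Z hZ_meas sfun
        (fun r hr => (hlevel r hr).2) hp hq hpq) hlam_pos.le
  have huIcc : Set.uIcc (0:ℝ) 1 = Set.Icc (0:ℝ) 1 := Set.uIcc_of_le zero_le_one
  have hint1 : IntervalIntegrable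
      (fun p => (∫ u in {u | tfun p < lam u}, lam u ∂μ) / (∫ u, lam u ∂μ)) volume 0 1 := by
    apply MonotoneOn.intervalIntegrable
    rwa [huIcc]
  have hint2 : IntervalIntegrable
      (fun p => (∫ u in {u | sfun p < Z u}, lam u ∂μ) / (∫ u, lam u ∂μ)) volume 0 1 := by
    apply MonotoneOn.intervalIntegrable
    rwa [huIcc]
  exact intervalIntegral.integral_mono_on zero_le_one hint2 hint1 fun p hp => hdiv p hp
end

section
/- Derivative of the theoretical C-ROC: suppose the intensity satisfies λ(u) = ρ(Z(u)) for u ∈ W, FP(t) = |{u : Z(u) > t}|/|W| is differentiable with strictly negative derivative, and ρ is continuous. Then the theoretical ROC curve R(p) = TP(FP⁻¹(p)), with TP(t) = ∫_W 1{Z(u) > t} λ(u) du / ∫_W λ(u) du, is differentiable with R′(p) = ρ(FP⁻¹(p))/κ, where κ = (∫_W λ(u) du)/|W|. In particular R(p) = (1/κ)∫₀^p ρ(FP⁻¹(v)) dv. -/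
open MeasureTheory Set intervalIntegral
open Filter

noncomputable def spatFP {W : Type*} [MeasurableSpace W] (μ : Measure W) (Z : W → ℝ)
    (t : ℝ) : ℝ :=
  (μ {u | t < Z u}).toReal / (μ Set.univ).toReal

/-- Theoretical true positive rate for intensity `λ(u) = ρ(Z(u))`. -/
noncomputable def theoTP {W : Type*} [MeasurableSpace W] (μ : Measure W)
    (Z : W → ℝ) (ρ : ℝ → ℝ) (t : ℝ) : ℝ :=
  (∫ u in {u | t < Z u}, ρ (Z u) ∂μ) / ∫ u, ρ (Z u) ∂μ

/-- derivative of the theoretical C-ROC.  If the intensity is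
`λ(u) = ρ(Z(u))` with `ρ` continuous, and `FP` is differentiable with strictly
negative derivative and (two-sided) inverse `FPinv`, then the theoretical ROC
curve `R(p) = TP(FP⁻¹(p))` is differentiable with `R′(p) = ρ(FP⁻¹(p))/κ`,
where `κ = (∫_W ρ(Z(u)) du)/|W|`; in particular
`R(p) = (1/κ)·∫₀^p ρ(FP⁻¹(v)) dv`. -/
theorem theo_roc_deriv
    {W : Type*} [MeasurableSpace W] (μ : Measure W) [IsFiniteMeasure μ]
    (hμ0 : 0 < μ Set.univ)
    (Z : W → ℝ) (hZ : Measurable Z)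
    (ρ : ℝ → ℝ) (hρ_cont : Continuous ρ) (hρ_nonneg : ∀ z, 0 ≤ ρ z)
    (hint : Integrable (fun u => ρ (Z u)) μ)
    (hpos : 0 < ∫ u, ρ (Z u) ∂μ)
    (FP' : ℝ → ℝ)
    (hFP_deriv : ∀ t, HasDerivAt (spatFP μ Z) (FP' t) t)
    (hFP'_neg : ∀ t, FP' t < 0)
    (FPinv : ℝ → ℝ)
    (hinv : ∀ p ∈ Set.Ioo (0 : ℝ) 1, spatFP μ Z (FPinv p) = p)
    (hinv' : ∀ t, FPinv (spatFP μ Z t) = t) :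
    (∀ p ∈ Set.Ioo (0 : ℝ) 1,
      HasDerivAt (fun q => theoTP μ Z ρ (FPinv q))
        (ρ (FPinv p) / ((∫ u, ρ (Z u) ∂μ) / (μ Set.univ).toReal)) p) ∧
    (∀ p ∈ Set.Ioo (0 : ℝ) 1,
      theoTP μ Z ρ (FPinv p) =
        (1 / ((∫ u, ρ (Z u) ∂μ) / (μ Set.univ).toReal)) *
          ∫ v in (0 : ℝ)..p, ρ (FPinv v)) := by
  set c : ℝ := (μ Set.univ).toReal with hc_def
  set I : ℝ := ∫ u, ρ (Z u) ∂μ with hI_def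
  set FP : ℝ → ℝ := spatFP μ Z with hFP_def
  set G : ℝ → ℝ := fun t => ∫ u in {u | t < Z u}, ρ (Z u) ∂μ with hG_def
  have hAmeas : ∀ t : ℝ, MeasurableSet {u | t < Z u} := fun t => hZ measurableSet_Ioi
  have hc : 0 < c := ENNReal.toReal_pos hμ0.ne' (measure_ne_top μ _)
  have hμA : ∀ t : ℝ, (μ {u | t < Z u}).toReal = c * FP t := by
    intro t
    have : FP t = (μ {u | t < Z u}).toReal / c := rfl
    rw [this]; field_simp
  have hGint : ∀ t : ℝ, IntegrableOn (fun u => ρ (Z u)) {u | t < Z u} μ :=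
    fun t => hint.integrableOn
  have hanti : StrictAnti FP := strictAnti_of_hasDerivAt_neg hFP_deriv hFP'_neg
  have hsub : ∀ t₁ t₂ : ℝ, t₁ ≤ t₂ → {u | t₂ < Z u} ⊆ {u | t₁ < Z u} :=
    fun t₁ t₂ h u hu => lt_of_le_of_lt h hu
  -- measure of slab
  have hmd : ∀ t₁ t₂ : ℝ, t₁ ≤ t₂ →
      (μ ({u | t₁ < Z u} \ {u | t₂ < Z u})).toReal = c * (FP t₁ - FP t₂) := by
    intro t₁ t₂ h
    have hadd : μ {u | t₂ < Z u} + μ ({u | t₁ < Z u} \ {u | t₂ < Z u})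
        = μ ({u | t₂ < Z u} ∪ {u | t₁ < Z u}) := measure_add_diff (hAmeas t₂).nullMeasurableSet _
    rw [union_eq_self_of_subset_left (hsub _ _ h)] at hadd
    have h1 := hμA t₁
    have h2 := hμA t₂
    have hfin : ∀ s : Set W, (μ s) ≠ ⊤ := fun s => measure_ne_top μ s
    have := congrArg ENNReal.toReal hadd
    rw [ENNReal.toReal_add (hfin _) (hfin _)] at this
    linarith
  -- integral over slab
  have hGd : ∀ t₁ t₂ : ℝ, t₁ ≤ t₂ →
      G t₁ - G t₂ = ∫ u in {u | t₁ < Z u} \ {u | t₂ < Z u}, ρ (Z u) ∂μ := by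
    intro t₁ t₂ h
    rw [integral_diff (hAmeas t₂) (hGint t₁) (hsub _ _ h)]
  -- the key estimate
  have est : ∀ t₀ t₁ t₂ : ℝ, t₁ ≤ t₂ → ∀ ε : ℝ,
      (∀ s, t₁ < s → s ≤ t₂ → |ρ s - ρ t₀| ≤ ε) →
      |(G t₁ - G t₂) - ρ t₀ * (c * (FP t₁ - FP t₂))| ≤ ε * (c * (FP t₁ - FP t₂)) := by
    intro t₀ t₁ t₂ h ε hε
    set S : Set W := {u | t₁ < Z u} \ {u | t₂ < Z u} with hS_def
    have hSmeas : MeasurableSet S := (hAmeas t₁).diff (hAmeas t₂)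
    have hSint : IntegrableOn (fun u => ρ (Z u)) S μ := hint.integrableOn
    have hconst : ∫ u in S, ρ t₀ ∂μ = (μ S).toReal • ρ t₀ := setIntegral_const _
    rw [hGd _ _ h, ← hmd _ _ h]
    have hsplit : (∫ u in S, ρ (Z u) ∂μ) - ρ t₀ * (μ S).toReal
        = ∫ u in S, (ρ (Z u) - ρ t₀) ∂μ := by
      rw [integral_sub hSint (integrableOn_const (measure_ne_top μ S)), hconst,
        smul_eq_mul]
      ring
    rw [hsplit]
    have hb := norm_setIntegral_le_of_norm_le_const (μ := μ) (s := S)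
      (f := fun u => ρ (Z u) - ρ t₀) (C := ε) (measure_lt_top μ S) ?_
    · rw [Real.norm_eq_abs] at hb; change _ ≤ ε * (μ S).toReal at hb
      linarith [hb]
    · intro u hu
      rw [Real.norm_eq_abs]
      exact hε (Z u) hu.1 (not_lt.1 hu.2)
  -- continuity of FPinv within (0,1)
  have hFPinv_cont : ∀ p ∈ Ioo (0:ℝ) 1, Tendsto FPinv (nhdsWithin p (Ioo (0:ℝ) 1))
      (nhds (FPinv p)) := by
    intro p hp
    rw [Metric.tendsto_nhdsWithin_nhds]
    intro ε hε
    set t := FPinv p with ht_def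
    have hFPt : FP t = p := hinv p hp
    have h1 : FP (t + ε) < p := by
      rw [← hFPt]; exact hanti (by linarith)
    have h2 : p < FP (t - ε) := by
      rw [← hFPt]; exact hanti (by linarith)
    refine ⟨min (p - FP (t + ε)) (FP (t - ε) - p), lt_min_iff.2 ⟨by linarith, by linarith⟩, ?_⟩
    intro q hq hdq
    rw [Real.dist_eq] at hdq ⊢
    have habs := abs_lt.1 (lt_of_lt_of_le hdq (min_le_left _ _))
    have habs' := abs_lt.1 (lt_of_lt_of_le hdq (min_le_right _ _))
    have hq1 : FP (t + ε) < q := by linarith [habs.1]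
    have hq2 : q < FP (t - ε) := by linarith [habs'.2]
    have hFPq : FP (FPinv q) = q := hinv q hq
    have hl : t - ε < FPinv q := by
      have : FP (FPinv q) < FP (t - ε) := by rw [hFPq]; exact hq2
      exact (hanti.lt_iff_gt).1 this
    have hr : FPinv q < t + ε := by
      have : FP (t + ε) < FP (FPinv q) := by rw [hFPq]; exact hq1
      exact (hanti.lt_iff_gt).1 this
    rw [abs_lt]
    constructor <;> linarith
  have hIoo_nhds : ∀ p ∈ Ioo (0:ℝ) 1, Ioo (0:ℝ) 1 ∈ nhds p :=
    fun p hp => isOpen_Ioo.mem_nhds hp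
  -- derivative of q ↦ G (FPinv q)
  have hg : ∀ p ∈ Ioo (0:ℝ) 1,
      HasDerivAt (fun q => G (FPinv q)) (c * ρ (FPinv p)) p := by
    intro p hp
    set t := FPinv p with ht_def
    have hFPt : FP t = p := hinv p hp
    rw [hasDerivAt_iff_tendsto]
    rw [Metric.tendsto_nhds]
    intro ε hε
    have hε' : 0 < ε / (2 * c) := by positivity
    obtain ⟨δ, hδ, hδρ⟩ := Metric.continuous_iff.1 hρ_cont t (ε / (2 * c)) hε'
    have hev1 : ∀ᶠ q in nhds p, |FPinv q - t| < δ := by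
      have h1 := hFPinv_cont p hp
      rw [← nhdsWithin_eq_nhds.2 (hIoo_nhds p hp)]
      have h2 := h1 (Metric.ball_mem_nhds (FPinv p) hδ)
      filter_upwards [h2] with q hq
      rwa [mem_preimage, Metric.mem_ball, Real.dist_eq] at hq
    filter_upwards [hev1, hIoo_nhds p hp] with q hdq hq
    -- main estimate
    have hkey : |G (FPinv q) - G t - (q - p) * (c * ρ t)| ≤ ε / (2 * c) * (c * |q - p|) := by
      have hFPq : FP (FPinv q) = q := hinv q hq
      rcases le_total q p with hqp | hqp
      · have htq : t ≤ FPinv q := by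
          refine (hanti.le_iff_ge).1 ?_
          rw [hFPq, hFPt]; exact hqp
        have hcond : ∀ s, t < s → s ≤ FPinv q → |ρ s - ρ t| ≤ ε / (2 * c) := by
          intro s hs1 hs2
          refine le_of_lt (hδρ s ?_)
          rw [Real.dist_eq, abs_lt]
          have : |FPinv q - t| < δ := hdq
          rw [abs_lt] at this
          constructor <;> [linarith; linarith]
        have h := est t t (FPinv q) htq (ε / (2 * c)) hcond
        rw [hFPt, hFPq] at h
        have habs : |q - p| = p - q := by rw [abs_of_nonpos (by linarith)]; ring
        rw [habs]
        calc |G (FPinv q) - G t - (q - p) * (c * ρ t)|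
            = |G t - G (FPinv q) - ρ t * (c * (p - q))| := by
              rw [← abs_neg]; ring_nf
          _ ≤ ε / (2 * c) * (c * (p - q)) := h
      · have htq : FPinv q ≤ t := by
          refine (hanti.le_iff_ge).1 ?_
          rw [hFPq, hFPt]; exact hqp
        have hcond : ∀ s, FPinv q < s → s ≤ t → |ρ s - ρ t| ≤ ε / (2 * c) := by
          intro s hs1 hs2
          refine le_of_lt (hδρ s ?_)
          rw [Real.dist_eq, abs_lt]
          have : |FPinv q - t| < δ := hdq
          rw [abs_lt] at this
          constructor <;> [linarith; linarith]
        have h := est t (FPinv q) t htq (ε / (2 * c)) hcond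
        rw [hFPt, hFPq] at h
        have habs : |q - p| = q - p := abs_of_nonneg (by linarith)
        rw [habs]
        calc |G (FPinv q) - G t - (q - p) * (c * ρ t)|
            = |G (FPinv q) - G t - ρ t * (c * (q - p))| := by ring_nf
          _ ≤ ε / (2 * c) * (c * (q - p)) := h
    rw [Real.dist_eq, sub_zero]
    rcases eq_or_ne q p with rfl | hne
    · simp [hε]
    · have hqp0 : 0 < |q - p| := abs_pos.2 (sub_ne_zero.2 hne)
      have : ‖q - p‖⁻¹ * ‖G (FPinv q) - G t - (q - p) • (c * ρ t)‖
          ≤ |q - p|⁻¹ * (ε / (2 * c) * (c * |q - p|)) := by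
        rw [Real.norm_eq_abs, Real.norm_eq_abs, smul_eq_mul]
        exact mul_le_mul_of_nonneg_left hkey (by positivity)
      have h2 : |q - p|⁻¹ * (ε / (2 * c) * (c * |q - p|)) = ε / 2 := by
        field_simp
      rw [abs_of_nonneg (by positivity)]
      calc ‖q - p‖⁻¹ * ‖G (FPinv q) - G t - (q - p) • (c * ρ t)‖
          ≤ ε / 2 := by rw [← h2]; exact this
        _ < ε := by linarith
  have hTP_eq : (fun q => theoTP μ Z ρ (FPinv q)) = (fun q => G (FPinv q) / I) := rfl
  have hIne : I ≠ 0 := ne_of_gt hpos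
  have hcne : c ≠ 0 := ne_of_gt hc
  have part1 : ∀ p ∈ Ioo (0:ℝ) 1,
      HasDerivAt (fun q => theoTP μ Z ρ (FPinv q)) (ρ (FPinv p) / (I / c)) p := by
    intro p hp
    have h := (hg p hp).div_const I
    rw [hTP_eq]
    rw [show ρ (FPinv p) / (I / c) = c * ρ (FPinv p) / I by rw [div_div_eq_mul_div]; ring]
    exact h
  refine ⟨part1, ?_⟩
  -- Part 2
  intro p hp
  obtain ⟨hp0, hp1⟩ := hp
  -- sequence approaching 0
  set a : ℕ → ℝ := fun n => p / (n + 2) with ha_def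
  have ha_mem : ∀ n, a n ∈ Ioo (0:ℝ) p := by
    intro n
    constructor
    · positivity
    · apply div_lt_self hp0
      have : (0:ℝ) ≤ (n:ℝ) := Nat.cast_nonneg n
      linarith
  have ha0 : Tendsto a atTop (nhds 0) := by
    apply Tendsto.div_atTop (tendsto_const_nhds (x := p))
    exact tendsto_atTop_add_const_right _ 2 tendsto_natCast_atTop_atTop
  have hICc : ∀ n, Icc (a n) p ⊆ Ioo (0:ℝ) 1 := by
    intro n x hx
    exact ⟨lt_of_lt_of_le (ha_mem n).1 hx.1, lt_of_le_of_lt hx.2 hp1⟩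
  -- continuity of ρ ∘ FPinv on (0,1)
  have hcontOn : ContinuousOn (fun v => ρ (FPinv v)) (Ioo (0:ℝ) 1) := by
    intro x hx
    exact (hρ_cont.continuousAt.comp_continuousWithinAt (hFPinv_cont x hx))
  have hInt_n : ∀ n, IntegrableOn (fun v => ρ (FPinv v)) (Ioc (a n) p) := by
    intro n
    exact ((hcontOn.mono (hICc n)).integrableOn_Icc).mono_set Ioc_subset_Icc_self
  -- FTC on [a n, p]
  have hFTC : ∀ n, ∫ v in Ioc (a n) p, (c * ρ (FPinv v)) = G (FPinv p) - G (FPinv (a n)) := by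
    intro n
    have hle : a n ≤ p := (ha_mem n).2.le
    have h := intervalIntegral.integral_eq_sub_of_hasDerivAt
      (f := fun q => G (FPinv q)) (f' := fun v => c * ρ (FPinv v)) (a := a n) (b := p)
      (fun x hx => hg x (hICc n ((uIcc_of_le hle) ▸ hx)))
      (((hcontOn.mono (hICc n)).const_smul c).intervalIntegrable_of_Icc hle)
    rw [intervalIntegral.integral_of_le hle] at h
    exact h
  have hg_nonneg : ∀ q, 0 ≤ G (FPinv q) := by
    intro q
    exact setIntegral_nonneg (hAmeas _) (fun u _ => hρ_nonneg _)
  -- integrability on (0, p]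
  have hbound : ∀ n, (∫ v in Ioc (a n) p, ‖ρ (FPinv v)‖) ≤ G (FPinv p) / c := by
    intro n
    have h1 : (∫ v in Ioc (a n) p, ‖ρ (FPinv v)‖) = ∫ v in Ioc (a n) p, ρ (FPinv v) := by
      refine setIntegral_congr_fun measurableSet_Ioc (fun v _ => ?_)
      exact Real.norm_of_nonneg (hρ_nonneg _)
    have h2 : c * ∫ v in Ioc (a n) p, ρ (FPinv v) = G (FPinv p) - G (FPinv (a n)) := by
      rw [← hFTC n, ← MeasureTheory.integral_const_mul]
    have h3 : c * ∫ v in Ioc (a n) p, ρ (FPinv v) ≤ G (FPinv p) := by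
      rw [h2]; linarith [hg_nonneg (a n)]
    rw [h1, le_div_iff₀' hc]
    exact h3
  have hInt : IntegrableOn (fun v => ρ (FPinv v)) (Ioc (0:ℝ) p) := by
    exact integrableOn_Ioc_of_intervalIntegral_norm_bounded_left hInt_n ha0
      (Eventually.of_forall hbound)
  -- convergence of the integrals
  have hconv : Tendsto (fun n => ∫ v in Ioc (a n) p, ρ (FPinv v)) atTop
      (nhds (∫ v in Ioc (0:ℝ) p, ρ (FPinv v))) := by
    have hφ : AECover ((volume : Measure ℝ).restrict (Ioc 0 p)) atTop
        (fun n => Ioc (a n) p) := aecover_Ioc_of_Ioc ha0 tendsto_const_nhds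
    have h := hφ.integral_tendsto_of_countably_generated (f := fun v => ρ (FPinv v)) hInt
    have heq : ∀ n, (∫ v in Ioc (a n) p, ρ (FPinv v) ∂((volume : Measure ℝ).restrict (Ioc 0 p)))
        = ∫ v in Ioc (a n) p, ρ (FPinv v) := by
      intro n
      rw [Measure.restrict_restrict measurableSet_Ioc,
        inter_eq_self_of_subset_left (Ioc_subset_Ioc_left (ha_mem n).1.le)]
    simp_rw [heq] at h
    exact h
  -- G (FPinv (a n)) → 0
  have hFPinv_top : Tendsto (fun n => FPinv (a n)) atTop atTop := by
    rw [tendsto_atTop]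
    intro M
    have hFPpos : 0 < FP M := by
      by_contra hcon
      push_neg at hcon
      have h1 : FP (M + 1) < FP M := hanti (by linarith)
      have h2 : 0 ≤ FP (M + 1) := div_nonneg ENNReal.toReal_nonneg ENNReal.toReal_nonneg
      linarith
    have hev : ∀ᶠ n in atTop, a n < FP M :=
      ha0.eventually (Filter.Tendsto.eventually_lt_const hFPpos tendsto_id) |>.mono (fun n h => h)
    filter_upwards [hev] with n hn
    have : FP (FPinv (a n)) < FP M := by
      rw [hinv (a n) ⟨(ha_mem n).1, lt_trans (ha_mem n).2 hp1⟩]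
      exact hn
    exact le_of_lt ((hanti.lt_iff_gt).1 this)
  have hg0 : Tendsto (fun n => G (FPinv (a n))) atTop (nhds 0) := by
    have hind : ∀ n, G (FPinv (a n)) =
        ∫ u, Set.indicator {u | FPinv (a n) < Z u} (fun u => ρ (Z u)) u ∂μ := by
      intro n
      rw [MeasureTheory.integral_indicator (hAmeas _)]
    have hptw : ∀ u : W, Tendsto
        (fun n => Set.indicator {u' | FPinv (a n) < Z u'} (fun u' => ρ (Z u')) u)
        atTop (nhds (0:ℝ)) := by
      intro u
      have hev : ∀ᶠ n in atTop, Z u ≤ FPinv (a n) :=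
        hFPinv_top.eventually (eventually_ge_atTop (Z u))
      refine tendsto_const_nhds.congr' ?_
      filter_upwards [hev] with n hn
      rw [Set.indicator_of_notMem (by simpa using hn.not_gt)]
    have hdom := tendsto_integral_filter_of_dominated_convergence (μ := μ)
      (F := fun n u => Set.indicator {u' | FPinv (a n) < Z u'} (fun u' => ρ (Z u')) u)
      (f := fun _ => (0:ℝ)) (bound := fun u => ρ (Z u))
      (Eventually.of_forall fun n =>
        hint.aestronglyMeasurable.indicator (hAmeas _))
      (Eventually.of_forall fun n => ae_of_all μ fun u => by
        calc ‖Set.indicator {u' | FPinv (a n) < Z u'} (fun u' => ρ (Z u')) u‖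
            ≤ ‖ρ (Z u)‖ := norm_indicator_le_norm_self _ _
          _ = ρ (Z u) := Real.norm_of_nonneg (hρ_nonneg _))
      hint
      (ae_of_all μ hptw)
    simp only [MeasureTheory.integral_zero] at hdom
    simp_rw [hind]
    exact hdom
  -- combine
  have hlim1 : Tendsto (fun n => c * ∫ v in Ioc (a n) p, ρ (FPinv v)) atTop
      (nhds (G (FPinv p))) := by
    have : Tendsto (fun n => G (FPinv p) - G (FPinv (a n))) atTop
        (nhds (G (FPinv p) - 0)) := tendsto_const_nhds.sub hg0
    rw [sub_zero] at this
    refine this.congr (fun n => ?_)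
    rw [← hFTC n, MeasureTheory.integral_const_mul]
  have hlim2 : Tendsto (fun n => c * ∫ v in Ioc (a n) p, ρ (FPinv v)) atTop
      (nhds (c * ∫ v in Ioc (0:ℝ) p, ρ (FPinv v))) := hconv.const_mul c
  have hfinal : G (FPinv p) = c * ∫ v in Ioc (0:ℝ) p, ρ (FPinv v) :=
    tendsto_nhds_unique hlim1 hlim2
  show G (FPinv p) / I = (1 / (I / c)) * ∫ v in (0:ℝ)..p, ρ (FPinv v)
  rw [intervalIntegral.integral_of_le hp0.le]
  rw [show (∫ v in Ioc (0:ℝ) p, ρ (FPinv v)) = G (FPinv p) / c by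
    rw [hfinal]; field_simp]
  field_simp
end
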